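/- Let μ ∈ (0,2) and f_λ(x) = (λ + ⟨x⟩^{-μ})^{1/2} for λ > 0. Let F_+ denote multiplication by the indicator of {x : λ ≥ ⟨x⟩^{-μ}}. Then for all u ∈ B(⟨x⟩), ‖f_λ^{-1/2} F_+ u‖_{B(f_λ⟨x⟩)} ≤ 8(√2 + 1) ‖u‖_{B(⟨x⟩)}, uniformly in λ > 0. -/

import Mathlib

open MeasureTheory Filter Topology
open scoped ENNReal

noncomputable section

/-- The dyadic radii: `R_0 = 0`, `R_j = 2^(j-1)` for `j ≥ 1`
(here indexed so that `dyadicR (k+1) = 2^k`). -/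
def dyadicR : ℕ → ℝ
  | 0 => 0
  | k + 1 => 2 ^ k

/-- For the self-adjoint multiplication operator by the real function `a` on `L²(μ)`,
the norm of the spectral block `F(R_k ≤ |A| < R_{k+1}) u`, i.e. of the restriction of
`u` to `{R_k ≤ |a| < R_{k+1}}`, valued in `ℝ≥0∞`. -/
def blockE {α : Type*} [MeasurableSpace α] (μ : Measure α) (a : α → ℝ) (u : α → ℂ)
    (k : ℕ) : ℝ≥0∞ :=
  eLpNorm (Set.indicator {x | dyadicR k ≤ |a x| ∧ |a x| < dyadicR (k + 1)} u) 2 μ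

/-- The Besov norm `‖u‖_{B(a)} = Σ_j R_j^{1/2} ‖F_j u‖` of the multiplication
operator by `a` on `L²(μ)`, valued in `ℝ≥0∞`; `u ∈ B(a)` iff this is finite. -/
def besovE {α : Type*} [MeasurableSpace α] (μ : Measure α) (a : α → ℝ) (u : α → ℂ) :
    ℝ≥0∞ :=
  ∑' k : ℕ, ENNReal.ofReal (Real.sqrt (dyadicR (k + 1))) * blockE μ a u k

/-- The dual Besov norm `‖u‖_{B(a)*} = sup_j R_j^{-1/2} ‖F_j u‖`, valued in `ℝ≥0∞`. -/
def dualE {α : Type*} [MeasurableSpace α] (μ : Measure α) (a : α → ℝ) (u : α → ℂ) :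
    ℝ≥0∞ :=
  ⨆ k : ℕ, (ENNReal.ofReal (Real.sqrt (dyadicR (k + 1))))⁻¹ * blockE μ a u k

/-- The Japanese bracket `⟨x⟩ = (|x|² + 1)^{1/2}` on `ℝ^d`. -/
def jap {d : ℕ} (x : EuclideanSpace ℝ (Fin d)) : ℝ := Real.sqrt (‖x‖ ^ 2 + 1)

/-! ### Auxiliary dyadic lemmas -/

lemma dyadicR_nonneg (k : ℕ) : 0 ≤ dyadicR k := by
  cases k with
  | zero => simp [dyadicR]
  | succ n => show (0:ℝ) ≤ 2 ^ n; positivity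

lemma dyadicR_pos (k : ℕ) : 0 < dyadicR (k + 1) := by
  show (0:ℝ) < 2 ^ k; positivity

lemma dyadicR_strictMono : StrictMono dyadicR := by
  apply strictMono_nat_of_lt_succ
  intro n
  cases n with
  | zero => show (0:ℝ) < 2 ^ 0; norm_num
  | succ k =>
      show (2:ℝ) ^ k < 2 ^ (k+1)
      have h : (0:ℝ) < 2 ^ k := by positivity
      rw [pow_succ]; nlinarith

lemma dyadicR_succ_eq (k : ℕ) : dyadicR (k + 2) = 2 * dyadicR (k + 1) := by
  show (2:ℝ) ^ (k+1) = 2 * 2 ^ k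
  rw [pow_succ]; ring

lemma dyadicR_add3 (k : ℕ) : dyadicR (k + 3) = 4 * dyadicR (k + 1) := by
  show (2:ℝ) ^ (k+2) = 4 * 2 ^ k
  rw [pow_succ, pow_succ]; ring

lemma dyadicR_one : dyadicR 1 = 1 := by
  show (2:ℝ) ^ 0 = 1; norm_num

/-- Dyadic block index of a real number `r ≥ 1`. -/
def blk (r : ℝ) : ℕ := (⌊Real.logb 2 r⌋).toNat + 1

lemma blk_spec {r : ℝ} (hr : 1 ≤ r) :
    dyadicR (blk r) ≤ r ∧ r < dyadicR (blk r + 1) := by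
  have hr0 : 0 < r := lt_of_lt_of_le one_pos hr
  have hlb : 0 ≤ Real.logb 2 r := Real.logb_nonneg one_lt_two hr
  have hfl : (0:ℤ) ≤ ⌊Real.logb 2 r⌋ := Int.floor_nonneg.mpr hlb
  have hcast : ((⌊Real.logb 2 r⌋.toNat : ℕ) : ℝ) = (⌊Real.logb 2 r⌋ : ℝ) := by
    exact_mod_cast congrArg (fun z : ℤ => (z : ℝ)) (Int.toNat_of_nonneg hfl)
  constructor
  · show (2:ℝ) ^ (⌊Real.logb 2 r⌋.toNat) ≤ r
    have h1 : (2:ℝ) ^ ((⌊Real.logb 2 r⌋.toNat : ℕ) : ℝ) ≤ 2 ^ Real.logb 2 r := by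
      apply Real.rpow_le_rpow_of_exponent_le one_le_two
      rw [hcast]; exact Int.floor_le _
    rw [Real.rpow_logb two_pos (by norm_num) hr0] at h1
    rwa [Real.rpow_natCast] at h1
  · show r < (2:ℝ) ^ (⌊Real.logb 2 r⌋.toNat + 1)
    have h1 : (2:ℝ) ^ Real.logb 2 r < 2 ^ (((⌊Real.logb 2 r⌋.toNat + 1 : ℕ)) : ℝ) := by
      apply Real.rpow_lt_rpow_of_exponent_lt one_lt_two
      push_cast
      rw [hcast]
      exact Int.lt_floor_add_one _
    rw [Real.rpow_logb two_pos (by norm_num) hr0] at h1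
    rwa [Real.rpow_natCast] at h1

lemma sqrt_two_le_two : Real.sqrt 2 ≤ 2 := by
  nlinarith [Real.sq_sqrt (show (0:ℝ) ≤ 2 by norm_num), Real.sqrt_nonneg 2]

lemma one_le_sqrt_two : 1 ≤ Real.sqrt 2 := by
  nlinarith [Real.sq_sqrt (show (0:ℝ) ≤ 2 by norm_num), Real.sqrt_nonneg 2]

lemma blk_window {s v : ℝ} (h1 : max 1 s ≤ v) (h2 : v < 2 * Real.sqrt 2 * max 1 s)
    {n : ℕ} (hn1 : dyadicR n ≤ v) (hn2 : v < dyadicR (n + 1)) :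
    blk (max 1 s) ≤ n ∧ n < blk (max 1 s) + 3 := by
  obtain ⟨hb1, hb2⟩ := blk_spec (le_max_left 1 s)
  set m := blk (max 1 s) with hm
  constructor
  · have hlt : dyadicR m < dyadicR (n + 1) := lt_of_le_of_lt (hb1.trans h1) hn2
    have := dyadicR_strictMono.lt_iff_lt.mp hlt
    omega
  · have hpos : 0 < dyadicR (m + 1) := dyadicR_pos m
    have hlt : v < dyadicR (m + 3) := by
      rw [dyadicR_add3]
      nlinarith [sqrt_two_le_two, Real.sqrt_nonneg 2, le_max_left (1:ℝ) s]
    have hlt2 : dyadicR n < dyadicR (m + 3) := lt_of_le_of_lt hn1 hlt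
    have := dyadicR_strictMono.lt_iff_lt.mp hlt2
    omega

/-! ### eLpNorm helpers -/

lemma eLpNorm_indicator_mono' {α : Type*} [MeasurableSpace α] (μ : Measure α)
    (u : α → ℂ) {s t : Set α} (h : s ⊆ t) :
    eLpNorm (s.indicator u) 2 μ ≤ eLpNorm (t.indicator u) 2 μ := by
  apply eLpNorm_mono
  intro x
  by_cases hx : x ∈ s
  · rw [Set.indicator_of_mem hx, Set.indicator_of_mem (h hx)]
  · rw [Set.indicator_of_notMem hx]
    simp [norm_nonneg]

lemma eLpNorm_indicator_union_le {α : Type*} [MeasurableSpace α] (μ : Measure α)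
    (u : α → ℂ) {s t : Set α} (hs : MeasurableSet s) (ht : MeasurableSet t) :
    eLpNorm ((s ∪ t).indicator u) 2 μ
      ≤ eLpNorm (s.indicator u) 2 μ + eLpNorm (t.indicator u) 2 μ := by
  have hp0 : (2 : ℝ≥0∞) ≠ 0 := by norm_num
  have hpt : (2 : ℝ≥0∞) ≠ ∞ := by norm_num
  have key : ∀ (w : Set α), MeasurableSet w →
      (∫⁻ x, (‖(w.indicator u) x‖₊ : ℝ≥0∞) ^ (2 : ℝ≥0∞).toReal ∂μ)
        = ∫⁻ x in w, (‖u x‖₊ : ℝ≥0∞) ^ (2 : ℝ≥0∞).toReal ∂μ := by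
    intro w hw
    rw [← lintegral_indicator hw]
    congr 1; funext x
    by_cases hx : x ∈ w
    · simp [Set.indicator_of_mem hx]
    · simp [Set.indicator_of_notMem hx, ENNReal.toReal_ofNat,
        ENNReal.zero_rpow_of_pos (by norm_num : (0:ℝ) < 2)]
  rw [eLpNorm_eq_lintegral_rpow_enorm_toReal hp0 hpt, eLpNorm_eq_lintegral_rpow_enorm_toReal hp0 hpt,
      eLpNorm_eq_lintegral_rpow_enorm_toReal hp0 hpt]
  simp only [enorm_eq_nnnorm]
  rw [key _ (hs.union ht), key _ hs, key _ ht]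
  calc (∫⁻ x in s ∪ t, (‖u x‖₊ : ℝ≥0∞) ^ (2 : ℝ≥0∞).toReal ∂μ) ^ (1 / (2 : ℝ≥0∞).toReal)
      ≤ ((∫⁻ x in s, (‖u x‖₊ : ℝ≥0∞) ^ (2:ℝ≥0∞).toReal ∂μ)
          + ∫⁻ x in t, (‖u x‖₊ : ℝ≥0∞) ^ (2:ℝ≥0∞).toReal ∂μ) ^ (1 / (2 : ℝ≥0∞).toReal) := by
        apply ENNReal.rpow_le_rpow (lintegral_union_le _ s t)
        rw [ENNReal.toReal_ofNat]; norm_num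
    _ ≤ _ := by
        apply ENNReal.rpow_add_le_add_rpow
        · rw [ENNReal.toReal_ofNat]; norm_num
        · rw [ENNReal.toReal_ofNat]; norm_num

/-- Key pointwise inequality: `t^{-1/4} √(2 Rk) ≤ √2 √Rj` when `Rk ≤ √t g` and `g ≤ Rj`. -/
lemma key_c_le {t g Rk Rj : ℝ} (ht : 0 < t) (hRk : 0 < Rk)
    (h1 : Rk ≤ Real.sqrt t * g) (h2 : g ≤ Rj) :
    t ^ (-(1/4 : ℝ)) ≤ Real.sqrt 2 * Real.sqrt Rj / Real.sqrt (2 * Rk) := by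
  have hsk : 0 < Real.sqrt (2 * Rk) := Real.sqrt_pos.mpr (by linarith)
  rw [le_div_iff₀ hsk]
  have h4 : Real.sqrt (Real.sqrt t) = t ^ ((1/4 : ℝ)) := by
    rw [Real.sqrt_eq_rpow, Real.sqrt_eq_rpow, ← Real.rpow_mul ht.le]
    norm_num
  have hc0 : 0 < t ^ (-(1/4 : ℝ)) := Real.rpow_pos_of_pos ht _
  calc t ^ (-(1/4 : ℝ)) * Real.sqrt (2 * Rk)
      ≤ t ^ (-(1/4 : ℝ)) * (Real.sqrt 2 * (t ^ ((1/4:ℝ)) * Real.sqrt g)) := by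
        apply mul_le_mul_of_nonneg_left _ hc0.le
        rw [← h4, ← Real.sqrt_mul (Real.sqrt_nonneg t) g, ← Real.sqrt_mul (by norm_num : (0:ℝ) ≤ 2)]
        exact Real.sqrt_le_sqrt (by linarith)
    _ = Real.sqrt 2 * Real.sqrt g * (t ^ (-(1/4:ℝ)) * t ^ ((1/4:ℝ))) := by ring
    _ = Real.sqrt 2 * Real.sqrt g := by
        rw [← Real.rpow_add ht]; norm_num
    _ ≤ Real.sqrt 2 * Real.sqrt Rj := by
        apply mul_le_mul_of_nonneg_left (Real.sqrt_le_sqrt h2) (Real.sqrt_nonneg 2)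

/-! ### Facts about `jap` -/

lemma one_le_jap {d : ℕ} (x : EuclideanSpace ℝ (Fin d)) : 1 ≤ jap x := by
  have h := Real.sqrt_le_sqrt (show (1:ℝ) ≤ ‖x‖ ^ 2 + 1 by nlinarith [sq_nonneg ‖x‖])
  rw [Real.sqrt_one] at h
  exact h

lemma jap_pos {d : ℕ} (x : EuclideanSpace ℝ (Fin d)) : 0 < jap x :=
  lt_of_lt_of_le one_pos (one_le_jap x)

lemma measurable_jap {d : ℕ} : Measurable (jap (d := d)) := by
  unfold jap
  fun_prop

namespace Stmt14

variable {d : ℕ}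

def aF (μ lam : ℝ) (x : EuclideanSpace ℝ (Fin d)) : ℝ :=
  Real.sqrt (lam + jap x ^ (-μ)) * jap x

def cF (μ lam : ℝ) (x : EuclideanSpace ℝ (Fin d)) : ℝ :=
  (lam + jap x ^ (-μ)) ^ (-(1 / 4 : ℝ))

def Sset (μ lam : ℝ) : Set (EuclideanSpace ℝ (Fin d)) := {x | jap x ^ (-μ) ≤ lam}

def Cset (μ lam : ℝ) (k : ℕ) : Set (EuclideanSpace ℝ (Fin d)) :=
  {x | dyadicR k ≤ |aF μ lam x| ∧ |aF μ lam x| < dyadicR (k + 1)}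

def Bset (j : ℕ) : Set (EuclideanSpace ℝ (Fin d)) :=
  {x | dyadicR j ≤ |jap x| ∧ |jap x| < dyadicR (j + 1)}

def W (k : ℕ) : ℝ≥0∞ := ENNReal.ofReal (Real.sqrt (dyadicR (k + 1)))

variable {μ lam : ℝ}

lemma t_pos (hlam : 0 < lam) (x : EuclideanSpace ℝ (Fin d)) :
    0 < lam + jap x ^ (-μ) := by
  have := Real.rpow_pos_of_pos (jap_pos x) (-μ)
  linarith

lemma f_lb (hlam : 0 < lam) (x : EuclideanSpace ℝ (Fin d)) :
    Real.sqrt lam ≤ Real.sqrt (lam + jap x ^ (-μ)) := by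
  apply Real.sqrt_le_sqrt
  have := Real.rpow_pos_of_pos (jap_pos x) (-μ)
  linarith

lemma f_ub {x : EuclideanSpace ℝ (Fin d)} (hx : x ∈ Sset μ lam) :
    Real.sqrt (lam + jap x ^ (-μ)) ≤ Real.sqrt 2 * Real.sqrt lam := by
  rw [← Real.sqrt_mul (by norm_num : (0:ℝ) ≤ 2)]
  apply Real.sqrt_le_sqrt
  have : jap x ^ (-μ) ≤ lam := hx
  linarith

lemma aF_pos (hlam : 0 < lam) (x : EuclideanSpace ℝ (Fin d)) : 0 < aF μ lam x :=
  mul_pos (Real.sqrt_pos.mpr (t_pos hlam x)) (jap_pos x)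

lemma aF_ge (hlam : 0 < lam) (hμ2 : μ < 2) {x : EuclideanSpace ℝ (Fin d)}
    (hx : x ∈ Sset μ lam) : Real.sqrt 2 ≤ aF μ lam x := by
  have hJ1 : 1 ≤ jap x := one_le_jap x
  have hJ0 : 0 < jap x := jap_pos x
  have hjm : 0 < jap x ^ (-μ) := Real.rpow_pos_of_pos hJ0 _
  have hS : jap x ^ (-μ) ≤ lam := hx
  have hpow : jap x ^ (-μ) * jap x ^ 2 = jap x ^ (-μ + 2) := by
    rw [show (jap x) ^ (2:ℕ) = jap x ^ ((2:ℕ):ℝ) from (Real.rpow_natCast _ 2).symm,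
      ← Real.rpow_add hJ0]
    norm_num
  have hexp : (1:ℝ) ≤ jap x ^ (-μ + 2) := by
    have := Real.rpow_le_rpow_of_exponent_le hJ1 (show (0:ℝ) ≤ -μ + 2 by linarith)
    rwa [Real.rpow_zero] at this
  have h2 : (2:ℝ) ≤ (lam + jap x ^ (-μ)) * (jap x) ^ 2 := by
    have hsq : (0:ℝ) < (jap x) ^ 2 := by positivity
    nlinarith
  have := Real.sqrt_le_sqrt h2
  rwa [Real.sqrt_mul (t_pos hlam x).le, Real.sqrt_sq hJ0.le] at this

lemma measurable_aF : Measurable (aF μ lam (d := d)) := by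
  unfold aF
  have hj := measurable_jap (d := d)
  fun_prop

lemma measurableSet_Cset (k : ℕ) : MeasurableSet (Cset μ lam k (d := d)) := by
  have h := (measurable_aF (μ := μ) (lam := lam) (d := d)).abs
  exact (measurableSet_le measurable_const h).inter (measurableSet_lt h measurable_const)

lemma measurableSet_Bset (j : ℕ) : MeasurableSet (Bset j (d := d)) := by
  have h := (measurable_jap (d := d)).abs
  exact (measurableSet_le measurable_const h).inter (measurableSet_lt h measurable_const)

lemma measurableSet_Sset : MeasurableSet (Sset μ lam (d := d)) := by
  have h : Measurable fun x : EuclideanSpace ℝ (Fin d) => jap x ^ (-μ) := by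
    have hj := measurable_jap (d := d)
    fun_prop
  exact measurableSet_le h measurable_const

lemma claimA (hlam : 0 < lam) (k : ℕ) :
    ∃ m : ℕ, ∀ x : EuclideanSpace ℝ (Fin d),
      x ∈ Cset μ lam (k + 1) → x ∈ Sset μ lam → ∀ j, x ∈ Bset j → m ≤ j ∧ j < m + 3 := by
  have hL : 0 < Real.sqrt lam := Real.sqrt_pos.mpr hlam
  have hs2 : 0 < Real.sqrt 2 := Real.sqrt_pos.mpr (by norm_num)
  refine ⟨blk (max 1 (dyadicR (k + 1) / (Real.sqrt 2 * Real.sqrt lam))), ?_⟩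
  intro x hxC hxS j hxB
  obtain ⟨hC1, hC2⟩ := hxC
  obtain ⟨hB1, hB2⟩ := hxB
  rw [abs_of_pos (aF_pos hlam x)] at hC1 hC2
  rw [abs_of_pos (jap_pos x)] at hB1 hB2
  have hJ1 : 1 ≤ jap x := one_le_jap x
  have hfub := f_ub hxS
  have hflb := f_lb (μ := μ) hlam x
  have haf : aF μ lam x = Real.sqrt (lam + jap x ^ (-μ)) * jap x := rfl
  apply blk_window _ _ hB1 hB2
  · apply max_le hJ1
    rw [div_le_iff₀ (by positivity)]
    nlinarith
  · calc jap x < 2 * Real.sqrt 2 * (dyadicR (k + 1) / (Real.sqrt 2 * Real.sqrt lam)) := by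
          have h1 : jap x * Real.sqrt lam ≤ aF μ lam x := by nlinarith
          have h2 : aF μ lam x < 2 * dyadicR (k + 1) := by
            rw [← dyadicR_succ_eq]; exact hC2
          rw [show 2 * Real.sqrt 2 * (dyadicR (k + 1) / (Real.sqrt 2 * Real.sqrt lam))
              = 2 * dyadicR (k + 1) / Real.sqrt lam by
            field_simp, lt_div_iff₀ hL]
          nlinarith
      _ ≤ 2 * Real.sqrt 2 * max 1 (dyadicR (k + 1) / (Real.sqrt 2 * Real.sqrt lam)) := by
          have := le_max_right (1:ℝ) (dyadicR (k + 1) / (Real.sqrt 2 * Real.sqrt lam))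
          nlinarith

lemma claimB (hlam : 0 < lam) (hμ2 : μ < 2) (j : ℕ) :
    ∃ m : ℕ, ∀ (k : ℕ) (x : EuclideanSpace ℝ (Fin d)),
      x ∈ Cset μ lam k → x ∈ Sset μ lam → x ∈ Bset j → m ≤ k ∧ k < m + 3 := by
  cases j with
  | zero =>
      refine ⟨0, fun k x _ _ hB => absurd hB.2 (not_lt.mpr ?_)⟩
      rw [show dyadicR (0 + 1) = 1 from dyadicR_one, abs_of_pos (jap_pos x)]
      exact one_le_jap x
  | succ j' =>
      have hL : 0 < Real.sqrt lam := Real.sqrt_pos.mpr hlam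
      have hs2 : 0 < Real.sqrt 2 := Real.sqrt_pos.mpr (by norm_num)
      refine ⟨blk (max 1 (Real.sqrt lam * dyadicR (j' + 1))), ?_⟩
      intro k x hxC hxS hxB
      obtain ⟨hC1, hC2⟩ := hxC
      obtain ⟨hB1, hB2⟩ := hxB
      rw [abs_of_pos (aF_pos hlam x)] at hC1 hC2
      rw [abs_of_pos (jap_pos x)] at hB1 hB2
      have hfub := f_ub hxS
      have hflb := f_lb (μ := μ) hlam x
      have hage := aF_ge hlam hμ2 hxS
      have haf : aF μ lam x = Real.sqrt (lam + jap x ^ (-μ)) * jap x := rfl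
      have hJ1 : 1 ≤ jap x := one_le_jap x
      have hRp : 0 < dyadicR (j' + 1) := dyadicR_pos j'
      apply blk_window _ _ hC1 hC2
      · apply max_le
        · linarith [one_le_sqrt_two]
        · have : Real.sqrt lam * dyadicR (j' + 1) ≤ Real.sqrt lam * jap x := by nlinarith
          nlinarith
      · have hB2' : jap x < 2 * dyadicR (j' + 1) := by
          rw [← dyadicR_succ_eq]; exact hB2
        have hfpos : 0 < Real.sqrt (lam + jap x ^ (-μ)) :=
          Real.sqrt_pos.mpr (t_pos hlam x)
        calc aF μ lam x = Real.sqrt (lam + jap x ^ (-μ)) * jap x := rfl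
          _ ≤ Real.sqrt 2 * Real.sqrt lam * jap x := by nlinarith
          _ < Real.sqrt 2 * Real.sqrt lam * (2 * dyadicR (j' + 1)) := by nlinarith
          _ = 2 * Real.sqrt 2 * (Real.sqrt lam * dyadicR (j' + 1)) := by ring
          _ ≤ 2 * Real.sqrt 2 * max 1 (Real.sqrt lam * dyadicR (j' + 1)) := by
              have := le_max_right (1:ℝ) (Real.sqrt lam * dyadicR (j' + 1))
              nlinarith

end Stmt14
namespace Stmt14

variable {d : ℕ} {μ lam : ℝ}

lemma blockE_eq (w : EuclideanSpace ℝ (Fin d) → ℂ) (k : ℕ) :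
    blockE volume (aF μ lam) w k = eLpNorm ((Cset μ lam k).indicator w) 2 volume := rfl

def G (μ lam : ℝ) (u : EuclideanSpace ℝ (Fin d) → ℂ) (k j : ℕ) : ℝ≥0∞ :=
  eLpNorm ((Cset μ lam k ∩ Sset μ lam ∩ Bset j).indicator u) 2 volume

lemma hterm (hlam : 0 < lam) (u : EuclideanSpace ℝ (Fin d) → ℂ) (k j : ℕ) :
    W (k + 1) * eLpNorm ((Cset μ lam (k + 1) ∩ Sset μ lam ∩ Bset j).indicator
        (fun x => cF μ lam x • u x)) 2 volume
      ≤ ENNReal.ofReal (Real.sqrt 2) * (W j * G μ lam u (k + 1) j) := by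
  set T := Cset μ lam (k + 1) ∩ Sset μ lam ∩ Bset j with hTdef
  set r : ℝ := Real.sqrt 2 * Real.sqrt (dyadicR (j + 1)) / Real.sqrt (dyadicR (k + 2)) with hr
  have hd2 : 0 < dyadicR (k + 2) := dyadicR_pos (k + 1)
  have hr0 : 0 ≤ r := by
    rw [hr]; positivity
  have hpw : ∀ x, ‖T.indicator (fun x => cF μ lam x • u x) x‖ ≤ ‖(r • T.indicator u) x‖ := by
    intro x
    by_cases hx : x ∈ T
    · rw [Set.indicator_of_mem hx, Pi.smul_apply, Set.indicator_of_mem hx, norm_smul, norm_smul]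
      apply mul_le_mul_of_nonneg_right _ (norm_nonneg _)
      rw [Real.norm_eq_abs, Real.norm_eq_abs, abs_of_nonneg hr0,
        abs_of_pos (show (0:ℝ) < cF μ lam x from Real.rpow_pos_of_pos (t_pos hlam x) _)]
      obtain ⟨⟨hxC, hxS⟩, hxB⟩ := hx
      obtain ⟨hC1, -⟩ := hxC
      obtain ⟨-, hB2⟩ := hxB
      rw [abs_of_pos (aF_pos hlam x)] at hC1
      rw [abs_of_pos (jap_pos x)] at hB2
      rw [hr, dyadicR_succ_eq]
      exact key_c_le (t_pos hlam x) (dyadicR_pos k) hC1 hB2.le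
    · rw [Set.indicator_of_notMem hx]
      simp only [norm_zero, Pi.smul_apply, norm_smul]
      positivity
  calc W (k + 1) * eLpNorm (T.indicator fun x => cF μ lam x • u x) 2 volume
      ≤ W (k + 1) * eLpNorm (r • T.indicator u) 2 volume :=
        mul_le_mul_right (eLpNorm_mono hpw) _
    _ = W (k + 1) * (ENNReal.ofReal r * eLpNorm (T.indicator u) 2 volume) := by
        rw [eLpNorm_const_smul, Real.enorm_eq_ofReal hr0]
    _ = ENNReal.ofReal (Real.sqrt (dyadicR (k + 2)) * r) * eLpNorm (T.indicator u) 2 volume := by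
        rw [ENNReal.ofReal_mul (Real.sqrt_nonneg _), ← mul_assoc]
        rfl
    _ = ENNReal.ofReal (Real.sqrt 2 * Real.sqrt (dyadicR (j + 1)))
          * eLpNorm (T.indicator u) 2 volume := by
        congr 2
        rw [hr]
        field_simp
    _ = ENNReal.ofReal (Real.sqrt 2) * (W j * G μ lam u (k + 1) j) := by
        rw [ENNReal.ofReal_mul (Real.sqrt_nonneg 2), mul_assoc]
        rfl

lemma step0 (hlam : 0 < lam) (hμ2 : μ < 2) (u : EuclideanSpace ℝ (Fin d) → ℂ) :
    blockE volume (aF μ lam) ((Sset μ lam).indicator (fun x => cF μ lam x • u x)) 0 = 0 := by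
  rw [blockE_eq, Set.indicator_indicator]
  have hempty : Cset μ lam 0 ∩ Sset μ lam = (∅ : Set (EuclideanSpace ℝ (Fin d))) := by
    ext x
    simp only [Set.mem_inter_iff, Set.mem_empty_iff_false, iff_false, not_and]
    rintro ⟨-, h2⟩ hS
    have hge := aF_ge hlam hμ2 hS
    rw [abs_of_pos (aF_pos hlam x), show dyadicR (0 + 1) = 1 from dyadicR_one] at h2
    linarith [one_le_sqrt_two]
  rw [hempty, Set.indicator_empty]
  exact eLpNorm_zero'

set_option maxHeartbeats 1000000 in
lemma step1 (hlam : 0 < lam) (u : EuclideanSpace ℝ (Fin d) → ℂ) (k : ℕ) :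
    W (k + 1) * blockE volume (aF μ lam)
        ((Sset μ lam).indicator (fun x => cF μ lam x • u x)) (k + 1)
      ≤ ENNReal.ofReal (Real.sqrt 2) * ∑' j, W j * G μ lam u (k + 1) j := by
  obtain ⟨m, hm⟩ := claimA (μ := μ) hlam k
  have hsub : Cset μ lam (k + 1) ∩ Sset μ lam ⊆ (Bset m ∪ Bset (m + 1) ∪ Bset (m + 2) : Set (EuclideanSpace ℝ (Fin d))) := by
    rintro x ⟨hC, hS⟩
    have hxB : x ∈ Bset (blk (jap x)) := by
      obtain ⟨h1, h2⟩ := blk_spec (one_le_jap x)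
      refine ⟨?_, ?_⟩
      · rw [abs_of_pos (jap_pos x)]; exact h1
      · rw [abs_of_pos (jap_pos x)]; exact h2
    obtain ⟨hj1, hj2⟩ := hm x hC hS _ hxB
    have hcase : blk (jap x) = m ∨ blk (jap x) = m + 1 ∨ blk (jap x) = m + 2 := by omega
    rcases hcase with h | h | h
    · left; left; rw [← h]; exact hxB
    · left; right; rw [← h]; exact hxB
    · right; rw [← h]; exact hxB
  have hset : (Cset μ lam (k + 1) ∩ Sset μ lam : Set (EuclideanSpace ℝ (Fin d)))
      = (Cset μ lam (k + 1) ∩ Sset μ lam ∩ Bset m)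
        ∪ (Cset μ lam (k + 1) ∩ Sset μ lam ∩ Bset (m + 1))
        ∪ (Cset μ lam (k + 1) ∩ Sset μ lam ∩ Bset (m + 2)) := by
    rw [← Set.inter_union_distrib_left, ← Set.inter_union_distrib_left]
    exact (Set.inter_eq_left.mpr hsub).symm
  have hms : ∀ i : ℕ, MeasurableSet
      (Cset μ lam (k + 1) ∩ Sset μ lam ∩ Bset i : Set (EuclideanSpace ℝ (Fin d))) :=
    fun i => ((measurableSet_Cset _).inter measurableSet_Sset).inter (measurableSet_Bset i)
  calc W (k + 1) * blockE volume (aF μ lam)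
        ((Sset μ lam).indicator (fun x => cF μ lam x • u x)) (k + 1)
      = W (k + 1) * eLpNorm ((Cset μ lam (k + 1) ∩ Sset μ lam).indicator
          (fun x => cF μ lam x • u x)) 2 volume := by
        rw [blockE_eq, Set.indicator_indicator]
    _ ≤ W (k + 1) * (eLpNorm ((Cset μ lam (k + 1) ∩ Sset μ lam ∩ Bset m).indicator
            (fun x => cF μ lam x • u x)) 2 volume
          + eLpNorm ((Cset μ lam (k + 1) ∩ Sset μ lam ∩ Bset (m + 1)).indicator
            (fun x => cF μ lam x • u x)) 2 volume
          + eLpNorm ((Cset μ lam (k + 1) ∩ Sset μ lam ∩ Bset (m + 2)).indicator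
            (fun x => cF μ lam x • u x)) 2 volume) := by
        apply mul_le_mul_right
        conv_lhs => rw [hset]
        refine le_trans (eLpNorm_indicator_union_le volume _ ((hms m).union (hms (m + 1)))
          (hms (m + 2))) ?_
        exact add_le_add_left (eLpNorm_indicator_union_le volume _ (hms m) (hms (m + 1))) _
    _ = W (k + 1) * eLpNorm ((Cset μ lam (k + 1) ∩ Sset μ lam ∩ Bset m).indicator
            (fun x => cF μ lam x • u x)) 2 volume
        + W (k + 1) * eLpNorm ((Cset μ lam (k + 1) ∩ Sset μ lam ∩ Bset (m + 1)).indicator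
            (fun x => cF μ lam x • u x)) 2 volume
        + W (k + 1) * eLpNorm ((Cset μ lam (k + 1) ∩ Sset μ lam ∩ Bset (m + 2)).indicator
            (fun x => cF μ lam x • u x)) 2 volume := by
        rw [mul_add, mul_add]
    _ ≤ ENNReal.ofReal (Real.sqrt 2) * (W m * G μ lam u (k + 1) m)
        + ENNReal.ofReal (Real.sqrt 2) * (W (m + 1) * G μ lam u (k + 1) (m + 1))
        + ENNReal.ofReal (Real.sqrt 2) * (W (m + 2) * G μ lam u (k + 1) (m + 2)) :=
        add_le_add (add_le_add (hterm hlam u k m) (hterm hlam u k (m + 1)))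
          (hterm hlam u k (m + 2))
    _ = ∑ j ∈ ({m, m + 1, m + 2} : Finset ℕ),
          ENNReal.ofReal (Real.sqrt 2) * (W j * G μ lam u (k + 1) j) := by
        rw [Finset.sum_insert (by simp only [Finset.mem_insert, Finset.mem_singleton]; omega),
          Finset.sum_insert (by simp only [Finset.mem_singleton]; omega),
          Finset.sum_singleton, add_assoc]
    _ ≤ ∑' j, ENNReal.ofReal (Real.sqrt 2) * (W j * G μ lam u (k + 1) j) :=
        ENNReal.sum_le_tsum _
    _ = ENNReal.ofReal (Real.sqrt 2) * ∑' j, W j * G μ lam u (k + 1) j :=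
        ENNReal.tsum_mul_left

lemma step2 (hlam : 0 < lam) (hμ2 : μ < 2) (u : EuclideanSpace ℝ (Fin d) → ℂ) (j : ℕ) :
    ∑' k, G μ lam u k j ≤ 3 * blockE volume jap u j := by
  obtain ⟨m, hm⟩ := claimB (μ := μ) hlam hμ2 j
  have hvan : ∀ k ∉ ({m, m + 1, m + 2} : Finset ℕ), G μ lam u k j = 0 := by
    intro k hk
    have hempty : Cset μ lam k ∩ Sset μ lam ∩ Bset j = (∅ : Set (EuclideanSpace ℝ (Fin d))) := by
      ext x
      simp only [Set.mem_inter_iff, Set.mem_empty_iff_false, iff_false, not_and]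
      rintro ⟨hC, hS⟩ hB
      obtain ⟨h1, h2⟩ := hm k x hC hS hB
      simp only [Finset.mem_insert, Finset.mem_singleton] at hk
      omega
    unfold G
    rw [hempty, Set.indicator_empty]
    exact eLpNorm_zero'
  rw [tsum_eq_sum hvan]
  have hle : ∀ k, G μ lam u k j ≤ blockE volume jap u j := by
    intro k
    exact eLpNorm_indicator_mono' volume u Set.inter_subset_right
  have hc : ({m, m + 1, m + 2} : Finset ℕ).card ≤ 3 := by
    refine le_trans (Finset.card_insert_le _ _) ?_
    have h2 := Finset.card_insert_le (m + 1) ({m + 2} : Finset ℕ)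
    rw [Finset.card_singleton] at h2
    omega
  calc ∑ k ∈ ({m, m + 1, m + 2} : Finset ℕ), G μ lam u k j
      ≤ ∑ _k ∈ ({m, m + 1, m + 2} : Finset ℕ), blockE volume jap u j :=
        Finset.sum_le_sum (fun i _ => hle i)
    _ = ({m, m + 1, m + 2} : Finset ℕ).card • blockE volume jap u j := Finset.sum_const _
    _ ≤ 3 * blockE volume jap u j := by
        rw [nsmul_eq_mul]
        apply mul_le_mul_left
        exact_mod_cast Nat.cast_le.mpr hc

end Stmt14

/-- for `μ ∈ (0,2)`, `f_λ(x) = (λ + ⟨x⟩^{-μ})^{1/2}` and `F₊` the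
indicator of `{λ ≥ ⟨x⟩^{-μ}}`, one has, uniformly in `λ > 0`,
`‖f_λ^{-1/2} F₊ u‖_{B(f_λ⟨x⟩)} ≤ 8(√2 + 1) ‖u‖_{B(⟨x⟩)}` for all `u ∈ B(⟨x⟩)`. -/
theorem stmt14 (d : ℕ) (μ : ℝ) (hμ0 : 0 < μ) (hμ2 : μ < 2) :
    ∀ lam : ℝ, 0 < lam → ∀ u : EuclideanSpace ℝ (Fin d) → ℂ,
      besovE volume (fun x => Real.sqrt (lam + jap x ^ (-μ)) * jap x)
          (Set.indicator {x | jap x ^ (-μ) ≤ lam}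
            (fun x => (((lam + jap x ^ (-μ)) ^ (-(1 / 4 : ℝ)) : ℝ) • u x)))
        ≤ ENNReal.ofReal (8 * (Real.sqrt 2 + 1)) * besovE volume jap u := by
  intro lam hlam u
  show besovE volume (Stmt14.aF μ lam) ((Stmt14.Sset μ lam).indicator
      (fun x => Stmt14.cF μ lam x • u x)) ≤ _
  have h1 : ∀ k, Stmt14.W k * blockE volume (Stmt14.aF μ lam)
      ((Stmt14.Sset μ lam).indicator (fun x => Stmt14.cF μ lam x • u x)) k
      ≤ ENNReal.ofReal (Real.sqrt 2) * ∑' j, Stmt14.W j * Stmt14.G μ lam u k j := by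
    intro k
    cases k with
    | zero =>
        rw [Stmt14.step0 hlam hμ2 u, mul_zero]
        exact zero_le
    | succ n => exact Stmt14.step1 hlam u n
  calc besovE volume (Stmt14.aF μ lam) ((Stmt14.Sset μ lam).indicator
        (fun x => Stmt14.cF μ lam x • u x))
      = ∑' k, Stmt14.W k * blockE volume (Stmt14.aF μ lam)
          ((Stmt14.Sset μ lam).indicator (fun x => Stmt14.cF μ lam x • u x)) k := rfl
    _ ≤ ∑' k, ENNReal.ofReal (Real.sqrt 2) * ∑' j, Stmt14.W j * Stmt14.G μ lam u k j :=
        ENNReal.tsum_le_tsum h1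
    _ = ENNReal.ofReal (Real.sqrt 2) * ∑' k, ∑' j, Stmt14.W j * Stmt14.G μ lam u k j :=
        ENNReal.tsum_mul_left
    _ = ENNReal.ofReal (Real.sqrt 2) * ∑' j, ∑' k, Stmt14.W j * Stmt14.G μ lam u k j := by
        rw [ENNReal.tsum_comm]
    _ = ENNReal.ofReal (Real.sqrt 2) * ∑' j, Stmt14.W j * ∑' k, Stmt14.G μ lam u k j := by
        congr 1
        exact tsum_congr (fun j => ENNReal.tsum_mul_left)
    _ ≤ ENNReal.ofReal (Real.sqrt 2) * ∑' j, Stmt14.W j * (3 * blockE volume jap u j) := by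
        apply mul_le_mul_right
        exact ENNReal.tsum_le_tsum (fun j => mul_le_mul_right (Stmt14.step2 hlam hμ2 u j) _)
    _ = ENNReal.ofReal (Real.sqrt 2) * (3 * ∑' j, Stmt14.W j * blockE volume jap u j) := by
        congr 1
        rw [← ENNReal.tsum_mul_left]
        exact tsum_congr (fun j => by ring)
    _ ≤ ENNReal.ofReal (8 * (Real.sqrt 2 + 1)) * besovE volume jap u := by
        rw [← mul_assoc]
        apply mul_le_mul_left
        calc ENNReal.ofReal (Real.sqrt 2) * 3
            = ENNReal.ofReal (Real.sqrt 2 * 3) := by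
              rw [show (3 : ℝ≥0∞) = ENNReal.ofReal 3 by simp,
                ← ENNReal.ofReal_mul (Real.sqrt_nonneg 2)]
          _ ≤ ENNReal.ofReal (8 * (Real.sqrt 2 + 1)) :=
              ENNReal.ofReal_le_ofReal (by nlinarith [sqrt_two_le_two, Real.sqrt_nonneg 2])
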